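/- Let λ ≥ 2, m ≥ 1 and t ≥ m be integers. Then there exists a measurable set A ⊆ 𝕋 (a finite union of intervals) with A ∩ λ·A = ∅ and μ(A) ≥ 1/2 − (1/2)·(1 − λ^{−m})^{(2t+1)/m} − (1/2)·λ^{−m}. -/

import Mathlib

open MeasureTheory Set

namespace DilateQuantAux

lemma fract_nat_mul_fract (n : ℕ) (y : ℝ) :
    Int.fract ((n : ℝ) * Int.fract y) = Int.fract ((n : ℝ) * y) := by
  conv_rhs => rw [show (n : ℝ) * y = (n : ℝ) * Int.fract y + ((n : ℤ) * ⌊y⌋ : ℤ) by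
    rw [Int.fract]; push_cast; ring]
  rw [Int.fract_add_intCast]

lemma vol_affine_preimage (L : ℕ) (hL : 0 < L) (k : ℝ) (B : Set ℝ) :
    volume ((fun x => (L : ℝ) * x - k) ⁻¹' B) = volume B / L := by
  have hL' : (L : ℝ) ≠ 0 := by positivity
  have h1 : (fun x : ℝ => (L : ℝ) * x - k) = (fun y : ℝ => y + (-k)) ∘ ((L : ℝ) * ·) := by
    funext x; simp [sub_eq_add_neg]
  rw [h1, Set.preimage_comp, Real.volume_preimage_mul_left hL',
    measure_preimage_add_right volume (-k) B]
  rw [abs_of_nonneg (by positivity : (0:ℝ) ≤ (L:ℝ)⁻¹), ENNReal.div_eq_inv_mul,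
    ← ENNReal.ofReal_natCast L, ← ENNReal.ofReal_inv_of_pos (by positivity)]

lemma affine_preimage_mem (L : ℕ) (k : ℕ) {B : Set ℝ} (hB : B ⊆ Ico 0 1) {x : ℝ}
    (hx : x ∈ (fun x => (L : ℝ) * x - (k : ℝ)) ⁻¹' B) :
    (k : ℝ) ≤ (L : ℝ) * x ∧ (L : ℝ) * x < (k : ℝ) + 1 := by
  have h := hB hx
  simp only [mem_preimage, mem_Ico] at h ⊢
  constructor <;> [linarith [h.1]; linarith [h.2]]

lemma decomp (L : ℕ) (hL : 0 < L) {B : Set ℝ} (hB : B ⊆ Ico 0 1) :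
    (fun x => Int.fract ((L : ℝ) * x)) ⁻¹' B ∩ Ico 0 1 =
      ⋃ k ∈ Finset.range L, (fun x => (L : ℝ) * x - (k : ℝ)) ⁻¹' B := by
  have hLpos : (0:ℝ) < L := by positivity
  ext x
  simp only [mem_inter_iff, mem_preimage, mem_Ico, Set.mem_iUnion, Finset.mem_range,
    exists_prop]
  constructor
  · rintro ⟨hfr, hx0, hx1⟩
    have h0 : (0:ℝ) ≤ (L : ℝ) * x := by positivity
    have h1 : (L : ℝ) * x < L := by nlinarith
    have hfl0 : 0 ≤ ⌊(L : ℝ) * x⌋ := Int.floor_nonneg.mpr h0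
    refine ⟨(⌊(L : ℝ) * x⌋).toNat, ?_, ?_⟩
    · have : ⌊(L : ℝ) * x⌋ < (L : ℤ) := by
        apply Int.floor_lt.mpr; exact_mod_cast h1
      omega
    · have hcast : ((⌊(L : ℝ) * x⌋).toNat : ℝ) = (⌊(L : ℝ) * x⌋ : ℝ) := by
        exact_mod_cast congrArg (Int.cast : ℤ → ℝ) (Int.toNat_of_nonneg hfl0)
      rw [hcast]
      rw [Int.fract] at hfr; exact hfr
  · rintro ⟨k, hkL, hk⟩
    have hmem := affine_preimage_mem L k hB hk
    have hfl : ⌊(L : ℝ) * x⌋ = (k : ℤ) := by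
      apply Int.floor_eq_iff.mpr
      constructor
      · exact_mod_cast hmem.1
      · push_cast; exact hmem.2
    have hf : Int.fract ((L : ℝ) * x) = (L : ℝ) * x - (k : ℝ) := by
      rw [Int.fract, hfl]; push_cast; ring
    refine ⟨by rw [hf]; exact hk, ?_, ?_⟩
    · nlinarith [hmem.1]
    · have hkL' : (k : ℝ) + 1 ≤ (L : ℝ) := by exact_mod_cast hkL
      nlinarith [hmem.2]

lemma vol_fract_preimage (L : ℕ) (hL : 0 < L) {B : Set ℝ} (hBm : MeasurableSet B)
    (hB : B ⊆ Ico 0 1) :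
    volume ((fun x => Int.fract ((L : ℝ) * x)) ⁻¹' B ∩ Ico 0 1) = volume B := by
  rw [decomp L hL hB]
  have hmeas : ∀ k : ℕ, MeasurableSet ((fun x => (L : ℝ) * x - (k : ℝ)) ⁻¹' B) := fun k =>
    hBm.preimage ((measurable_id.const_mul _).sub_const _)
  rw [measure_biUnion_finset ?_ (fun k _ => hmeas k)]
  · have : ∀ k ∈ Finset.range L, volume ((fun x => (L : ℝ) * x - (k : ℝ)) ⁻¹' B)
        = volume B / L := fun k _ => vol_affine_preimage L hL _ B
    rw [Finset.sum_congr rfl this, Finset.sum_const, Finset.card_range, nsmul_eq_mul]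
    exact ENNReal.mul_div_cancel (by exact_mod_cast hL.ne') (ENNReal.natCast_ne_top L)
  · intro a ha b hb hab
    refine Set.disjoint_left.mpr fun x hxa hxb => hab ?_
    have h1 := affine_preimage_mem L a hB hxa
    have h2 := affine_preimage_mem L b hB hxb
    have : (a : ℝ) < (b : ℝ) + 1 := by linarith [h1.1, h2.2]
    have : (b : ℝ) < (a : ℝ) + 1 := by linarith [h2.1, h1.2]
    have ha' : a < b + 1 := by exact_mod_cast ‹(a : ℝ) < (b : ℝ) + 1›
    have hb' : b < a + 1 := by exact_mod_cast ‹(b : ℝ) < (a : ℝ) + 1›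
    omega

lemma vol_fract_preimage_small (L : ℕ) (hL : 0 < L) {B : Set ℝ} (hB : B ⊆ Ico 0 1) :
    volume ((fun x => Int.fract ((L : ℝ) * x)) ⁻¹' B ∩ Ico 0 ((L : ℝ)⁻¹)) = volume B / L := by
  have hLpos : (0:ℝ) < L := by positivity
  have hset : (fun x => Int.fract ((L : ℝ) * x)) ⁻¹' B ∩ Ico 0 ((L : ℝ)⁻¹) =
      (fun x => (L : ℝ) * x - (0:ℝ)) ⁻¹' B := by
    ext x
    simp only [mem_inter_iff, mem_preimage, mem_Ico, sub_zero]
    constructor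
    · rintro ⟨hfr, hx0, hx1⟩
      have h0 : (0:ℝ) ≤ (L : ℝ) * x := by positivity
      have h1 : (L : ℝ) * x < 1 := by
        calc (L : ℝ) * x < (L : ℝ) * (L : ℝ)⁻¹ := by exact mul_lt_mul_of_pos_left hx1 hLpos
        _ = 1 := mul_inv_cancel₀ hLpos.ne'
      rwa [Int.fract_eq_self.mpr ⟨h0, h1⟩] at hfr
    · intro hx
      have h := hB hx
      simp only [mem_Ico] at h
      have hx0 : 0 ≤ x := by nlinarith [h.1]
      have hx1 : x < (L : ℝ)⁻¹ := by
        rw [← one_div, lt_div_iff₀ hLpos]; nlinarith [h.2]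
      exact ⟨by rwa [Int.fract_eq_self.mpr ⟨h.1, h.2⟩], hx0, hx1⟩
  rw [hset, vol_affine_preimage L hL 0 B]

/-! ### the hitting sets -/

/-- `x` (thought of in `[0,1)`) "hits" at time `j` if the `m` base-`l` digits of `x`
at positions `j+1,…,j+m` are all zero. -/
def hitS (l m j : ℕ) : Set ℝ := {x | Int.fract ((l : ℝ) ^ j * x) < ((l : ℝ) ^ m)⁻¹}

/-- first hit happens exactly at time `j`. -/
def ES (l m j : ℕ) : Set ℝ :=
  {x ∈ Ico (0:ℝ) 1 | (∀ i, i < j → x ∉ hitS l m i) ∧ x ∈ hitS l m j}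

/-- no hit before time `n`. -/
def NH (l m n : ℕ) : Set ℝ := {x ∈ Ico (0:ℝ) 1 | ∀ k, k < n → x ∉ hitS l m k}

/-- no hit at the times `0, m, 2m, …, (n-1)m`. -/
def BL (l m n : ℕ) : Set ℝ := {x ∈ Ico (0:ℝ) 1 | ∀ k, k < n → x ∉ hitS l m (k * m)}

lemma meas_hitS (l m j : ℕ) : MeasurableSet (hitS l m j) :=
  (measurable_fract.comp (measurable_id.const_mul _)) measurableSet_Iio

lemma meas_ES (l m j : ℕ) : MeasurableSet (ES l m j) := by
  have h1 : ES l m j = (Ico (0:ℝ) 1 ∩ ⋂ i ∈ {i : ℕ | i < j}, (hitS l m i)ᶜ) ∩ hitS l m j := by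
    ext x; simp [ES, mem_iInter, and_assoc]
  rw [h1]
  exact ((measurableSet_Ico.inter
    (MeasurableSet.biInter (Set.to_countable _) fun i _ => (meas_hitS l m i).compl)).inter
    (meas_hitS l m j))

lemma meas_NH (l m n : ℕ) : MeasurableSet (NH l m n) := by
  have h1 : NH l m n = Ico (0:ℝ) 1 ∩ ⋂ i ∈ {i : ℕ | i < n}, (hitS l m i)ᶜ := by
    ext x; simp [NH, mem_iInter]
  rw [h1]
  exact measurableSet_Ico.inter
    (MeasurableSet.biInter (Set.to_countable _) fun i _ => (meas_hitS l m i).compl)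

lemma meas_BL (l m n : ℕ) : MeasurableSet (BL l m n) := by
  have h1 : BL l m n = Ico (0:ℝ) 1 ∩ ⋂ i ∈ {i : ℕ | i < n}, (hitS l m (i * m))ᶜ := by
    ext x; simp [BL, mem_iInter]
  rw [h1]
  exact measurableSet_Ico.inter
    (MeasurableSet.biInter (Set.to_countable _) fun i _ => (meas_hitS l m _).compl)

lemma ES_subset (l m j : ℕ) : ES l m j ⊆ Ico (0:ℝ) 1 := fun _ hx => hx.1

lemma hitS_shift (l m j e : ℕ) (x : ℝ) :
    x ∈ hitS l m (j + e) ↔ Int.fract ((l : ℝ) ^ e * x) ∈ hitS l m j := by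
  simp only [hitS, mem_setOf_eq]
  have : Int.fract ((l:ℝ) ^ j * Int.fract ((l:ℝ) ^ e * x)) = Int.fract ((l:ℝ) ^ (j+e) * x) := by
    have h := fract_nat_mul_fract (l ^ j) ((l:ℝ) ^ e * x)
    push_cast at h
    rw [h, ← mul_assoc, ← pow_add]
  rw [this]

lemma forall_lt_succ_iff {j : ℕ} {P : ℕ → Prop} :
    (∀ i, i < j + 1 → P i) ↔ P 0 ∧ ∀ i, i < j → P (i + 1) := by
  constructor
  · exact fun h => ⟨h 0 (Nat.succ_pos _), fun i hi => h (i + 1) (by omega)⟩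
  · rintro ⟨h0, h⟩ i hi
    cases i with
    | zero => exact h0
    | succ n => exact h n (by omega)

lemma ES_succ (l m j : ℕ) :
    ES l m (j + 1) =
      ((fun x => Int.fract ((l : ℝ) * x)) ⁻¹' ES l m j ∩ Ico (0:ℝ) 1) \ hitS l m 0 := by
  ext x
  have key : ∀ i : ℕ, x ∈ hitS l m (i + 1) ↔ Int.fract ((l:ℝ) * x) ∈ hitS l m i := by
    intro i
    have h := hitS_shift l m i 1 x
    rwa [pow_one] at h
  have hIm : Int.fract ((l:ℝ) * x) ∈ Ico (0:ℝ) 1 := ⟨Int.fract_nonneg _, Int.fract_lt_one _⟩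
  simp only [ES, mem_diff, mem_inter_iff, mem_preimage, sep_setOf, mem_setOf_eq]
  constructor
  · rintro ⟨hI, hno, hj⟩
    rw [forall_lt_succ_iff] at hno
    exact ⟨⟨⟨hIm, fun i hi h => hno.2 i hi ((key i).mpr h), (key j).mp hj⟩, hI⟩, hno.1⟩
  · rintro ⟨⟨⟨_, hno, hj⟩, hI⟩, h0⟩
    refine ⟨hI, ?_, (key j).mpr hj⟩
    rw [forall_lt_succ_iff]
    exact ⟨h0, fun i hi h => hno i hi ((key i).mp h)⟩

lemma BL_succ (l m n : ℕ) :
    BL l m (n + 1) =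
      ((fun x => Int.fract (((l ^ m : ℕ) : ℝ) * x)) ⁻¹' BL l m n ∩ Ico (0:ℝ) 1)
        \ hitS l m 0 := by
  ext x
  have hcast : ((l ^ m : ℕ) : ℝ) = (l : ℝ) ^ m := by push_cast; ring
  have hIm : Int.fract (((l ^ m : ℕ):ℝ) * x) ∈ Ico (0:ℝ) 1 :=
    ⟨Int.fract_nonneg _, Int.fract_lt_one _⟩
  simp only [BL, mem_diff, mem_inter_iff, mem_preimage, sep_setOf, mem_setOf_eq]
  constructor
  · rintro ⟨hI, hno⟩
    rw [forall_lt_succ_iff] at hno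
    refine ⟨⟨⟨hIm, fun k hk h => hno.2 k hk ?_⟩, hI⟩, by simpa using hno.1⟩
    rw [show (k+1) * m = k * m + m by ring, hitS_shift l m (k*m) m, ← hcast]
    exact h
  · rintro ⟨⟨⟨_, hno⟩, hI⟩, h0⟩
    refine ⟨hI, ?_⟩
    rw [forall_lt_succ_iff]
    refine ⟨by simpa using h0, fun k hk h => hno k hk ?_⟩
    rw [show (k+1) * m = k * m + m by ring, hitS_shift l m (k*m) m, ← hcast] at h
    exact h

lemma ES_disj (l m : ℕ) {i j : ℕ} (hij : i < j) : Disjoint (ES l m i) (ES l m j) := by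
  refine Set.disjoint_left.mpr fun x hxi hxj => ?_
  exact hxj.2.1 i hij hxi.2.2


lemma sum_range_two_mul (f : ℕ → ENNReal) (n : ℕ) :
    ∑ j ∈ Finset.range (2 * n), f j = ∑ i ∈ Finset.range n, (f (2 * i) + f (2 * i + 1)) := by
  induction n with
  | zero => simp
  | succ n ih =>
      rw [show 2 * (n + 1) = 2 * n + 1 + 1 by ring, Finset.sum_range_succ, Finset.sum_range_succ,
        ih, Finset.sum_range_succ, add_assoc]

section Main

variable {l m : ℕ}

lemma c_pos (hl : 2 ≤ l) : (0:ℝ) < ((l : ℝ) ^ m)⁻¹ := by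
  have h0 : (0:ℝ) < (l:ℝ) := by exact_mod_cast Nat.lt_of_lt_of_le two_pos hl
  positivity

lemma two_le_pow (hl : 2 ≤ l) (hm : 1 ≤ m) : (2:ℝ) ≤ (l : ℝ) ^ m := by
  calc (2:ℝ) ≤ (l : ℝ) := by exact_mod_cast hl
  _ ≤ (l : ℝ) ^ m := le_self_pow₀ (by exact_mod_cast Nat.le_trans one_le_two hl) (by omega)

lemma c_le_half (hl : 2 ≤ l) (hm : 1 ≤ m) : ((l : ℝ) ^ m)⁻¹ ≤ 1 / 2 := by
  rw [show (1:ℝ)/2 = 2⁻¹ by norm_num]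
  exact inv_anti₀ (by norm_num) (two_le_pow hl hm)

lemma hitS_zero_inter (hl : 2 ≤ l) (hm : 1 ≤ m) (S : Set ℝ) :
    (S ∩ Ico (0:ℝ) 1) ∩ hitS l m 0 = S ∩ Ico 0 (((l : ℝ) ^ m)⁻¹) := by
  have hc2 := c_le_half hl hm
  ext x
  simp only [mem_inter_iff, mem_Ico, hitS, mem_setOf_eq, pow_zero, one_mul, and_assoc]
  constructor
  · rintro ⟨hS, h0, h1, hfr⟩
    rw [Int.fract_eq_self.mpr ⟨h0, h1⟩] at hfr
    exact ⟨hS, h0, hfr⟩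
  · rintro ⟨hS, h0, hc⟩
    have h1 : x < 1 := by linarith
    exact ⟨hS, h0, h1, by rwa [Int.fract_eq_self.mpr ⟨h0, h1⟩]⟩

lemma vol_step (hl : 2 ≤ l) (hm : 1 ≤ m) (j : ℕ) :
    volume (ES l m (j + 1)) +
      volume ((fun x => Int.fract ((l : ℝ) * x)) ⁻¹' ES l m j ∩ Ico 0 (((l : ℝ) ^ m)⁻¹)) =
    volume (ES l m j) := by
  set pre := (fun x => Int.fract ((l : ℝ) * x)) ⁻¹' ES l m j with hpre
  have h1 := measure_inter_add_diff (μ := volume) (pre ∩ Ico (0:ℝ) 1) (meas_hitS l m 0)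
  rw [hitS_zero_inter hl hm pre, ← ES_succ] at h1
  have h2 : volume (pre ∩ Ico (0:ℝ) 1) = volume (ES l m j) :=
    vol_fract_preimage l (by omega) (meas_ES l m j) (ES_subset l m j)
  rw [h2] at h1
  rw [add_comm] at h1
  exact h1

lemma vol_BL (hl : 2 ≤ l) (hm : 1 ≤ m) :
    ∀ n : ℕ, volume (BL l m n) = ENNReal.ofReal ((1 - ((l : ℝ) ^ m)⁻¹) ^ n) := by
  have hc0 := c_pos (m := m) hl
  have hc2 := c_le_half hl hm
  intro n
  induction n with
  | zero =>
      have h0 : BL l m 0 = Ico (0:ℝ) 1 := by ext x; simp [BL]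
      rw [h0, Real.volume_Ico]
      norm_num
  | succ n ih =>
      have hl0 : 0 < l := by omega
      have hLpos : 0 < l ^ m := Nat.pow_pos hl0
      set pre := (fun x => Int.fract (((l ^ m : ℕ) : ℝ) * x)) ⁻¹' BL l m n with hpre
      have h1 := measure_inter_add_diff (μ := volume) (pre ∩ Ico (0:ℝ) 1) (meas_hitS l m 0)
      rw [hitS_zero_inter hl hm pre, ← BL_succ] at h1
      have h2 : volume (pre ∩ Ico (0:ℝ) 1) = volume (BL l m n) :=
        vol_fract_preimage (l ^ m) hLpos (meas_BL l m n) (fun x hx => hx.1)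
      have hcast : ((l : ℝ) ^ m)⁻¹ = (((l ^ m : ℕ) : ℝ))⁻¹ := by push_cast; ring
      have h4 : volume (pre ∩ Ico 0 (((l : ℝ) ^ m)⁻¹)) = volume (BL l m n) / (l ^ m : ℕ) := by
        rw [hcast]
        exact vol_fract_preimage_small (l ^ m) hLpos (fun x hx => hx.1)
      rw [h2, h4, ih] at h1
      have h1c : (0:ℝ) ≤ 1 - ((l : ℝ) ^ m)⁻¹ := by linarith
      set y := (1 - ((l : ℝ) ^ m)⁻¹) ^ n with hy
      have hy0 : 0 ≤ y := pow_nonneg h1c n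
      have hdiv : ENNReal.ofReal y / (l ^ m : ℕ) =
          ENNReal.ofReal (y * ((l : ℝ) ^ m)⁻¹) := by
        rw [← ENNReal.ofReal_natCast (l ^ m),
          ← ENNReal.ofReal_div_of_pos (by exact_mod_cast hLpos)]
        congr 1
        rw [div_eq_mul_inv, hcast]
      rw [hdiv] at h1
      have hsplit : ENNReal.ofReal y =
          ENNReal.ofReal (y * (1 - ((l : ℝ) ^ m)⁻¹)) + ENNReal.ofReal (y * ((l : ℝ) ^ m)⁻¹) := by
        rw [← ENNReal.ofReal_add (mul_nonneg hy0 h1c) (mul_nonneg hy0 hc0.le)]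
        congr 1; ring
      rw [hsplit, add_comm] at h1
      have hfin := (ENNReal.add_left_inj (ENNReal.ofReal_ne_top)).mp h1
      rw [hfin, pow_succ]

lemma vol_cover (l m n : ℕ) :
    volume (⋃ j ∈ Finset.range n, ES l m j) + volume (NH l m n) = 1 := by
  classical
  have hdisj : Disjoint (⋃ j ∈ Finset.range n, ES l m j) (NH l m n) := by
    rw [Set.disjoint_left]
    intro x hx hx'
    simp only [mem_iUnion, Finset.mem_range, exists_prop] at hx
    obtain ⟨j, hj, hxj⟩ := hx
    exact hx'.2 j hj hxj.2.2
  have hunion : (⋃ j ∈ Finset.range n, ES l m j) ∪ NH l m n = Ico (0:ℝ) 1 := by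
    apply Subset.antisymm
    · rintro x (hx | hx)
      · simp only [mem_iUnion, Finset.mem_range, exists_prop] at hx
        obtain ⟨j, _, hxj⟩ := hx
        exact ES_subset l m j hxj
      · exact hx.1
    · intro x hx
      by_cases hno : ∀ k, k < n → x ∉ hitS l m k
      · exact Or.inr ⟨hx, hno⟩
      · push_neg at hno
        obtain ⟨k, hk, hxk⟩ := hno
        have hex : ∃ j, x ∈ hitS l m j := ⟨k, hxk⟩
        left
        simp only [mem_iUnion, Finset.mem_range, exists_prop]
        exact ⟨Nat.find hex, lt_of_le_of_lt (Nat.find_min' hex hxk) hk,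
          hx, fun i hi => Nat.find_min hex hi, Nat.find_spec hex⟩
  rw [← measure_union hdisj (meas_NH l m n), hunion, Real.volume_Ico]
  norm_num

lemma vol_qsum (hl : 2 ≤ l) (hm : 1 ≤ m) (T : ℕ) :
    ∑ i ∈ Finset.range T,
        volume ((fun x => Int.fract ((l : ℝ) * x)) ⁻¹' ES l m (2 * i) ∩
          Ico 0 (((l : ℝ) ^ m)⁻¹)) ≤ ENNReal.ofReal (((l : ℝ) ^ m)⁻¹) := by
  have hdisj : Set.PairwiseDisjoint ↑(Finset.range T)
      (fun i => (fun x => Int.fract ((l : ℝ) * x)) ⁻¹' ES l m (2 * i) ∩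
        Ico 0 (((l : ℝ) ^ m)⁻¹)) := by
    intro i _ j _ hij
    have hdES : Disjoint (ES l m (2 * i)) (ES l m (2 * j)) := by
      rcases lt_or_gt_of_ne hij with h | h
      · exact ES_disj l m (by omega)
      · exact (ES_disj l m (by omega)).symm
    exact ((hdES.preimage _).mono inter_subset_left inter_subset_left)
  have hmeas : ∀ i ∈ Finset.range T, MeasurableSet
      ((fun x => Int.fract ((l : ℝ) * x)) ⁻¹' ES l m (2 * i) ∩ Ico 0 (((l : ℝ) ^ m)⁻¹)) :=
    fun i _ => ((meas_ES l m (2 * i)).preimage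
      (measurable_fract.comp (measurable_id.const_mul _))).inter measurableSet_Ico
  rw [← measure_biUnion_finset hdisj hmeas]
  refine le_trans (measure_mono (iUnion₂_subset fun i _ => inter_subset_right)) ?_
  rw [Real.volume_Ico, sub_zero]

end Main

end DilateQuantAux

open DilateQuantAux

theorem exists_set_disjoint_dilate_quantitative (l m t : ℕ)
    (hl : 2 ≤ l) (hm : 1 ≤ m) (ht : m ≤ t) :
    ∃ A : Set UnitAddCircle, MeasurableSet A ∧
      A ∩ ((fun x => (l : ℤ) • x) '' A) = ∅ ∧
      ENNReal.ofReal (1 / 2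
          - (1 / 2) * (1 - (l : ℝ) ^ (-(m : ℤ))) ^ (((2 * t + 1 : ℕ) : ℝ) / m)
          - (1 / 2) * (l : ℝ) ^ (-(m : ℤ)))
        ≤ volume A := by
  classical
  haveI : Fact ((0:ℝ) < 1) := ⟨one_pos⟩
  have hl0 : 0 < l := by omega
  have hmpos : 0 < m := hm
  have hc0 : (0:ℝ) < ((l : ℝ) ^ m)⁻¹ := c_pos hl
  have hc2 : ((l : ℝ) ^ m)⁻¹ ≤ 1 / 2 := c_le_half hl hm
  have h1c0 : (0:ℝ) < 1 - ((l : ℝ) ^ m)⁻¹ := by linarith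
  have h1c1 : 1 - ((l : ℝ) ^ m)⁻¹ ≤ 1 := by linarith
  set K : ℕ := (2 * t + 1) / m with hKdef
  set A₀ : Set ℝ := ⋃ i ∈ Finset.range (t + 1), ES l m (2 * i + 1) with hA₀
  have hA₀m : MeasurableSet A₀ :=
    MeasurableSet.biUnion (Finset.range (t + 1)).countable_toSet (fun i _ => meas_ES l m _)
  have hA₀I : A₀ ⊆ Ico (0:ℝ) 1 := by
    rw [hA₀]; exact iUnion₂_subset fun i _ => ES_subset l m _
  have hA₀fin : volume A₀ ≠ ⊤ := by
    refine ne_top_of_le_ne_top ?_ (measure_mono hA₀I)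
    rw [Real.volume_Ico]; exact ENNReal.ofReal_ne_top
  have hsum : volume A₀ = ∑ i ∈ Finset.range (t + 1), volume (ES l m (2 * i + 1)) := by
    rw [hA₀]
    refine measure_biUnion_finset ?_ (fun i _ => meas_ES l m _)
    intro i _ j _ hij
    rcases lt_or_gt_of_ne hij with h | h
    · exact ES_disj l m (by omega)
    · exact (ES_disj l m (by omega)).symm
  have hvolU : volume (⋃ j ∈ Finset.range (2 * (t + 1)), ES l m j)
      = ∑ j ∈ Finset.range (2 * (t + 1)), volume (ES l m j) := by
    refine measure_biUnion_finset ?_ (fun j _ => meas_ES l m j)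
    intro i _ j _ hij
    rcases lt_or_gt_of_ne hij with h | h
    · exact ES_disj l m h
    · exact (ES_disj l m h).symm
  have hNHBL : NH l m (2 * (t + 1)) ⊆ BL l m (K + 1) := by
    rintro x ⟨hI, h⟩
    refine ⟨hI, fun k hk => h (k * m) ?_⟩
    have h1 : k ≤ K := by omega
    have h2 : K * m ≤ 2 * t + 1 := by rw [hKdef]; exact Nat.div_mul_le_self _ _
    have h3 : k * m ≤ K * m := Nat.mul_le_mul_right m h1
    omega
  have hBL : volume (BL l m (K + 1))
      = ENNReal.ofReal ((1 - ((l : ℝ) ^ m)⁻¹) ^ (K + 1)) := vol_BL hl hm (K + 1)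
  have hkey : (1:ENNReal) ≤ volume A₀ + volume A₀ + ENNReal.ofReal (((l : ℝ) ^ m)⁻¹)
      + ENNReal.ofReal ((1 - ((l : ℝ) ^ m)⁻¹) ^ (K + 1)) := by
    have hcover := (vol_cover l m (2 * (t + 1))).symm
    calc (1:ENNReal) = volume (⋃ j ∈ Finset.range (2 * (t + 1)), ES l m j)
          + volume (NH l m (2 * (t + 1))) := hcover
    _ ≤ volume (⋃ j ∈ Finset.range (2 * (t + 1)), ES l m j)
          + volume (BL l m (K + 1)) := add_le_add_right (measure_mono hNHBL) _
    _ = (∑ i ∈ Finset.range (t + 1), (volume (ES l m (2 * i)) + volume (ES l m (2 * i + 1))))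
          + ENNReal.ofReal ((1 - ((l : ℝ) ^ m)⁻¹) ^ (K + 1)) := by
        rw [hvolU, sum_range_two_mul, hBL]
    _ = (∑ i ∈ Finset.range (t + 1), (volume (ES l m (2 * i + 1)) + volume (ES l m (2 * i + 1))
          + volume ((fun x => Int.fract ((l : ℝ) * x)) ⁻¹' ES l m (2 * i)
            ∩ Ico 0 (((l : ℝ) ^ m)⁻¹))))
          + ENNReal.ofReal ((1 - ((l : ℝ) ^ m)⁻¹) ^ (K + 1)) := by
        congr 1
        refine Finset.sum_congr rfl fun i _ => ?_
        rw [← vol_step hl hm (2 * i)]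
        ring
    _ = (volume A₀ + volume A₀ + ∑ i ∈ Finset.range (t + 1),
          volume ((fun x => Int.fract ((l : ℝ) * x)) ⁻¹' ES l m (2 * i)
            ∩ Ico 0 (((l : ℝ) ^ m)⁻¹)))
          + ENNReal.ofReal ((1 - ((l : ℝ) ^ m)⁻¹) ^ (K + 1)) := by
        rw [Finset.sum_add_distrib, Finset.sum_add_distrib, hsum]
    _ ≤ _ := by
        refine add_le_add_left (add_le_add_right ?_ _) _
        exact vol_qsum hl hm (t + 1)
  set α : ℝ := (volume A₀).toReal with hα
  have hα0 : 0 ≤ α := ENNReal.toReal_nonneg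
  have hy0 : (0:ℝ) ≤ (1 - ((l : ℝ) ^ m)⁻¹) ^ (K + 1) := by positivity
  have hαofReal : volume A₀ = ENNReal.ofReal α := (ENNReal.ofReal_toReal hA₀fin).symm
  have hreal : (1:ℝ) ≤ α + α + ((l : ℝ) ^ m)⁻¹ + (1 - ((l : ℝ) ^ m)⁻¹) ^ (K + 1) := by
    have hcomb : volume A₀ + volume A₀ + ENNReal.ofReal (((l : ℝ) ^ m)⁻¹)
        + ENNReal.ofReal ((1 - ((l : ℝ) ^ m)⁻¹) ^ (K + 1))
        = ENNReal.ofReal (α + α + ((l : ℝ) ^ m)⁻¹ + (1 - ((l : ℝ) ^ m)⁻¹) ^ (K + 1)) := by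
      rw [hαofReal, ← ENNReal.ofReal_add hα0 hα0,
        ← ENNReal.ofReal_add (by linarith) hc0.le,
        ← ENNReal.ofReal_add (by linarith) hy0]
    rw [hcomb, ← ENNReal.ofReal_one] at hkey
    exact (ENNReal.ofReal_le_ofReal_iff (by positivity)).mp hkey
  have hKm : ((2 * t + 1 : ℕ) : ℝ) / (m : ℝ) ≤ ((K : ℝ) + 1) := by
    rw [div_le_iff₀ (by exact_mod_cast hmpos)]
    have hnat : 2 * t + 1 ≤ (K + 1) * m := by
      have h := Nat.div_add_mod (2 * t + 1) m
      have h2 := Nat.mod_lt (2 * t + 1) hmpos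
      calc 2 * t + 1 = m * K + (2 * t + 1) % m := by rw [hKdef]; omega
      _ ≤ m * K + m := by omega
      _ = (K + 1) * m := by ring
    exact_mod_cast hnat
  have hrpow : (1 - ((l : ℝ) ^ m)⁻¹) ^ (K + 1)
      ≤ (1 - ((l : ℝ) ^ m)⁻¹) ^ (((2 * t + 1 : ℕ) : ℝ) / (m : ℝ)) := by
    rw [← Real.rpow_natCast (1 - ((l : ℝ) ^ m)⁻¹) (K + 1)]
    refine Real.rpow_le_rpow_of_exponent_ge h1c0 h1c1 ?_
    exact_mod_cast hKm
  -- the circle set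
  set F : UnitAddCircle → ℝ := fun z => ((AddCircle.equivIco 1 0 z : ℝ)) with hF
  have hFmeas : Measurable F :=
    measurable_subtype_coe.comp (AddCircle.measurableEquivIco 1 0).measurable
  set A : Set UnitAddCircle := F ⁻¹' A₀ with hA
  have hAmeas : MeasurableSet A := hFmeas hA₀m
  have hFr : ∀ r : ℝ, F ((r : ℝ) : UnitAddCircle) = Int.fract r := by
    intro r
    have h := AddCircle.coe_equivIco_mk_apply (p := 1) r
    simpa [hF] using h
  have hmem : ∀ r : ℝ, ((r : ℝ) : UnitAddCircle) ∈ A ↔ Int.fract r ∈ A₀ := by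
    intro r
    rw [hA, mem_preimage, hFr r]
  have hkeyA : ∀ u, u ∈ A₀ → Int.fract ((l : ℝ) * u) ∉ A₀ := by
    intro u hu hv
    rw [hA₀] at hu hv
    simp only [mem_iUnion, Finset.mem_range, exists_prop] at hu hv
    obtain ⟨i, hi, hESu⟩ := hu
    obtain ⟨i', hi', hESv⟩ := hv
    obtain ⟨hIu, hnou, hhitu⟩ := hESu
    obtain ⟨hIv, hnov, hhitv⟩ := hESv
    have hshift : ∀ j : ℕ, u ∈ hitS l m (j + 1) ↔ Int.fract ((l : ℝ) * u) ∈ hitS l m j := by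
      intro j
      have h := hitS_shift l m j 1 u
      rwa [pow_one] at h
    have hvhit : Int.fract ((l : ℝ) * u) ∈ hitS l m (2 * i) := (hshift _).mp hhitu
    have hvno : ∀ j, j < 2 * i → Int.fract ((l : ℝ) * u) ∉ hitS l m j :=
      fun j hj hcontra => hnou (j + 1) (by omega) ((hshift j).mpr hcontra)
    rcases lt_trichotomy (2 * i' + 1) (2 * i) with h | h | h
    · exact hvno _ h hhitv
    · omega
    · exact hnov (2 * i) h hvhit
  have hdisj : A ∩ ((fun x => (l : ℤ) • x) '' A) = ∅ := by
    ext z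
    simp only [mem_inter_iff, mem_image, mem_empty_iff_false, iff_false, not_and]
    intro hzA himg
    obtain ⟨w, hwA, rfl⟩ := himg
    obtain ⟨r, rfl⟩ := QuotientAddGroup.mk_surjective w
    have hsm : (l : ℤ) • ((r : ℝ) : UnitAddCircle) = (((l : ℝ) * r : ℝ) : UnitAddCircle) := by
      rw [← AddCircle.coe_zsmul]
      congr 1
      rw [zsmul_eq_mul]
      push_cast
      ring
    have hzA' : (l : ℤ) • ((r : ℝ) : UnitAddCircle) ∈ A := hzA
    rw [hsm] at hzA'
    have h1 : Int.fract ((l : ℝ) * r) ∈ A₀ := (hmem _).mp hzA' 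
    have h2 : Int.fract r ∈ A₀ := (hmem _).mp hwA
    have h3 := hkeyA _ h2
    rw [fract_nat_mul_fract l r] at h3
    exact h3 h1
  have hvolA : volume A₀ ≤ volume A := by
    rw [AddCircle.add_projection_respects_measure (T := 1) 0 hAmeas]
    have hsub : A₀ \ {0} ⊆ QuotientAddGroup.mk ⁻¹' A ∩ Ioc (0:ℝ) (0 + 1) := by
      rintro x ⟨hx, hx0⟩
      have hxI := hA₀I hx
      constructor
      · show ((x : ℝ) : UnitAddCircle) ∈ A
        rw [hmem x, Int.fract_eq_self.mpr ⟨hxI.1, hxI.2⟩]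
        exact hx
      · exact ⟨lt_of_le_of_ne hxI.1 (by simpa using (Ne.symm hx0)), by
          have := hxI.2; linarith⟩
    calc volume A₀ = volume (A₀ \ {0}) := (measure_diff_null Real.volume_singleton).symm
    _ ≤ _ := measure_mono hsub
  refine ⟨A, hAmeas, hdisj, ?_⟩
  have hzc : (l : ℝ) ^ (-(m : ℤ)) = ((l : ℝ) ^ m)⁻¹ := by
    rw [zpow_neg, zpow_natCast]
  rw [hzc]
  calc ENNReal.ofReal (1 / 2
        - 1 / 2 * (1 - ((l : ℝ) ^ m)⁻¹) ^ (((2 * t + 1 : ℕ) : ℝ) / (m : ℝ))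
        - 1 / 2 * ((l : ℝ) ^ m)⁻¹)
      ≤ ENNReal.ofReal α := ENNReal.ofReal_le_ofReal (by linarith)
  _ = volume A₀ := hαofReal.symm
  _ ≤ volume A := hvolA
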